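/- Let 1 < a ≤ 2 with Q_a Misiurewicz–Thurston, and let R > 0 be an admissible radius for Q_a. Then for every integer m ≥ 1 there exists K > 0 such that the following holds: for all z₀ ∈ ℂ and all n ≥ 1, writing z_i := Q_a^{mi}(z₀), if |Q_a(z₁)| ≥ R and |z_n| ≥ R, then |z₀| ≤ K·|z_n|^{2^{−mn}} and |(Q_a^{mn})′(z₀)| ≥ K^{−1}·2^{mn}·|z_n|^{1 − 2^{−mn}}. -/

import Mathlib

open Set MeasureTheory Filter

noncomputable section

/-- The quadratic map `Q_c(x) = c - x²` on `ℝ`. -/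
def Q (c : ℝ) : ℝ → ℝ := fun x => c - x ^ 2

/-- `Q_c` is Misiurewicz–Thurston: `0` is not periodic but some iterate of `0` is periodic. -/
def MT (c : ℝ) : Prop :=
  (∀ p : ℕ, 1 ≤ p → (Q c)^[p] 0 ≠ 0) ∧
  ∃ k : ℕ, 1 ≤ k ∧ ∃ p : ℕ, 1 ≤ p ∧ (Q c)^[p] ((Q c)^[k] 0) = (Q c)^[k] 0

/-- The quadratic map `Q_a(z) = a - z²` on `ℂ`. -/
def QC (a : ℝ) : ℂ → ℂ := fun z => (a : ℂ) - z ^ 2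

/-- `R` is an admissible radius for `Q_a`: the Julia set (points with bounded forward
orbit) lies in the open disk of radius `R`, and `Q_a⁻¹` of the closed disk of radius `R`
lies in the open disk of radius `R`. -/
def AdmRadius (a R : ℝ) : Prop :=
  0 < R ∧
  (∀ z : ℂ, Bornology.IsBounded (Set.range fun n : ℕ => (QC a)^[n] z) → ‖z‖ < R) ∧
  (∀ z : ℂ, ‖QC a z‖ ≤ R → ‖z‖ < R)

namespace Stmt5Aux

lemma abs_QC_le (a : ℝ) (ha : 0 ≤ a) (z : ℂ) :
    ‖QC a z‖ ≤ ‖z‖ ^ 2 + a := by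
  unfold QC
  calc ‖(a:ℂ) - z^2‖ ≤ ‖(a:ℂ)‖ + ‖z^2‖ := by
        exact norm_sub_le (a:ℂ) (z^2)
    _ = ‖z‖ ^ 2 + a := by
        rw [norm_pow, Complex.norm_real, Real.norm_eq_abs, abs_of_nonneg ha]; ring

lemma le_abs_QC (a : ℝ) (ha : 0 ≤ a) (z : ℂ) :
    ‖z‖ ^ 2 - a ≤ ‖QC a z‖ := by
  unfold QC
  have h : ‖z^2‖ ≤ ‖(a:ℂ) - z^2‖ + ‖(a:ℂ)‖ := by
    calc ‖z^2‖ = ‖(a:ℂ) - ((a:ℂ) - z^2)‖ := by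
          rw [show (a:ℂ) - ((a:ℂ) - z^2) = z^2 by ring]
      _ ≤ ‖(a:ℂ)‖ + ‖(a:ℂ) - z^2‖ := norm_sub_le _ _
      _ = ‖(a:ℂ) - z^2‖ + ‖(a:ℂ)‖ := by ring
  rw [norm_pow, Complex.norm_real, Real.norm_eq_abs, abs_of_nonneg ha] at h
  linarith



/-- the fixed point -β with β=(1+√(1+4a))/2 gives basic facts about R -/
lemma R_facts (a R : ℝ) (ha1 : 1 < a) (ha2 : a ≤ 2) (hR : AdmRadius a R) :
    1 < R ∧ a < R ∧ R + a < R ^ 2 := by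
  set s := Real.sqrt (1 + 4 * a) with hs
  have hs2 : s ^ 2 = 1 + 4 * a := Real.sq_sqrt (by linarith)
  have hs1 : 2 < s := by
    nlinarith [Real.sqrt_nonneg (1 + 4*a), hs2]
  set β : ℝ := (1 + s) / 2 with hβ
  have hβ1 : 1 < β := by simp only [hβ]; linarith
  have hββ : β ^ 2 = β + a := by simp only [hβ]; nlinarith [hs2]
  have hβ2 : β ≤ 2 := by nlinarith
  have haβ : a ≤ β := by nlinarith
  -- -β is fixed by QC a
  have hfix : QC a (-(β:ℂ)) = -(β:ℂ) := by
    unfold QC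
    have hc : ((β:ℂ))^2 = (β:ℂ) + (a:ℂ) := by exact_mod_cast congrArg Complex.ofReal hββ
    rw [show (-(β:ℂ))^2 = ((β:ℂ))^2 by ring, hc]
    ring
  have hiter : ∀ n : ℕ, (QC a)^[n] (-(β:ℂ)) = -(β:ℂ) := by
    intro n
    induction n with
    | zero => simp
    | succ k ih => rw [Function.iterate_succ_apply', ih, hfix]
  have hβR : β < R := by
    have hb := hR.2.1 (-(β:ℂ)) ?_
    · rwa [show ‖-(β:ℂ)‖ = β by
        rw [norm_neg, Complex.norm_real, Real.norm_eq_abs, abs_of_nonneg (by linarith : (0:ℝ) ≤ β)]] at hb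
    · have : (Set.range fun n : ℕ => (QC a)^[n] (-(β:ℂ))) ⊆ {-(β:ℂ)} := by
        rintro z ⟨n, rfl⟩; simp [hiter n]
      exact (Bornology.isBounded_singleton).subset this
  refine ⟨by linarith, by linarith, ?_⟩
  nlinarith [hββ, hβR, hβ1]


section Exp
variable {a R : ℝ}

lemma expand_once (ha : 0 < a) (hRa : R + a < R ^ 2) (hR0 : 0 < R)
    {z : ℂ} (hz : R ≤ ‖z‖) :
    ((R ^ 2 - a) / R) * ‖z‖ ≤ ‖QC a z‖ := by
  have h1 := le_abs_QC a ha.le z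
  set t := ‖z‖ with ht
  have key : ((R ^ 2 - a) / R) * t ≤ t ^ 2 - a := by
    rw [div_mul_eq_mul_div, div_le_iff₀ hR0]
    nlinarith [mul_nonneg (sub_nonneg.2 hz) (by positivity : (0:ℝ) ≤ R * t + a)]
  linarith

lemma one_lt_lam (ha : 0 < a) (hRa : R + a < R ^ 2) (hR0 : 0 < R) :
    1 < (R ^ 2 - a) / R := by
  rw [lt_div_iff₀ hR0]; linarith

lemma iter_expand (ha : 0 < a) (hRa : R + a < R ^ 2) (hR0 : 0 < R) :
    ∀ (j : ℕ) (w : ℂ), R ≤ ‖w‖ →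
      ((R ^ 2 - a) / R) ^ j * R ≤ ‖(QC a)^[j] w‖ := by
  intro j
  induction j with
  | zero => intro w hw; simpa using hw
  | succ k ih =>
    intro w hw
    set lam := (R ^ 2 - a) / R with hlam
    have hlam1 : 1 < lam := one_lt_lam ha hRa hR0
    have hk := ih w hw
    have hge : R ≤ ‖(QC a)^[k] w‖ := by
      have : R ≤ lam ^ k * R := le_mul_of_one_le_left hR0.le (one_le_pow₀ hlam1.le)
      linarith
    have := expand_once ha hRa hR0 hge
    rw [Function.iterate_succ_apply']
    calc lam ^ (k+1) * R = lam * (lam ^ k * R) := by ring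
      _ ≤ lam * ‖(QC a)^[k] w‖ :=
        mul_le_mul_of_nonneg_left hk (by linarith)
      _ ≤ _ := this


lemma onestep_up (ha : 0 < a) (hR1 : 1 < R) (hRa : R + a < R ^ 2) {ρ : ℝ} (hρ : R ≤ ρ)
    {w : ℂ} (hw : ρ ≤ ‖w‖) :
    Real.log (‖QC a w‖) ≤ 2 * Real.log (‖w‖) + a / ρ ^ 2 := by
  set t := ‖w‖ with ht
  have htR : R ≤ t := hρ.trans hw
  have ht0 : 0 < t := by linarith
  have hρ0 : 0 < ρ := by linarith
  have h2 : 0 < t ^ 2 - a := by nlinarith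
  have hup : ‖QC a w‖ ≤ t ^ 2 + a := abs_QC_le a ha.le w
  have hlo : t ^ 2 - a ≤ ‖QC a w‖ := le_abs_QC a ha.le w
  have hlog1 : Real.log (‖QC a w‖) ≤ Real.log (t ^ 2 + a) :=
    Real.log_le_log (by linarith) hup
  have hfac : t ^ 2 + a = t ^ 2 * (1 + a / t ^ 2) := by field_simp
  have hxpos : 0 < 1 + a / t ^ 2 := by positivity
  have hlog2 : Real.log (t ^ 2 + a) = 2 * Real.log t + Real.log (1 + a / t ^ 2) := by
    rw [hfac, Real.log_mul (by positivity) (by positivity), Real.log_pow]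
    push_cast; ring
  have hlog3 : Real.log (1 + a / t ^ 2) ≤ a / t ^ 2 := by
    have := Real.log_le_sub_one_of_pos hxpos
    linarith
  have hlast : a / t ^ 2 ≤ a / ρ ^ 2 := by gcongr
  linarith

lemma onestep_down (ha : 0 < a) (hR1 : 1 < R) (hRa : R + a < R ^ 2) {ρ : ℝ} (hρ : R ≤ ρ)
    {w : ℂ} (hw : ρ ≤ ‖w‖) :
    2 * Real.log (‖w‖) - a * R ^ 2 / ((R ^ 2 - a) * ρ ^ 2)
      ≤ Real.log (‖QC a w‖) := by
  set t := ‖w‖ with ht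
  have htR : R ≤ t := hρ.trans hw
  have ht0 : 0 < t := by linarith
  have hρ0 : 0 < ρ := by linarith
  have hR2a : 0 < R ^ 2 - a := by nlinarith
  have h2 : 0 < t ^ 2 - a := by nlinarith
  have hlo : t ^ 2 - a ≤ ‖QC a w‖ := le_abs_QC a ha.le w
  have hlog1 : Real.log (t ^ 2 - a) ≤ Real.log (‖QC a w‖) :=
    Real.log_le_log h2 hlo
  set x := a / t ^ 2 with hx
  have hx0 : 0 < x := by positivity
  have hx1 : x < 1 := by
    rw [hx, div_lt_one (by positivity)]; nlinarith
  have hfac : t ^ 2 - a = t ^ 2 * (1 - x) := by rw [hx]; field_simp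
  have hlog2 : Real.log (t ^ 2 - a) = 2 * Real.log t + Real.log (1 - x) := by
    rw [hfac, Real.log_mul (by positivity) (by linarith), Real.log_pow]
    push_cast; ring
  have h1x0 : (0:ℝ) < 1 - x := by linarith
  have hinv : Real.log ((1 - x)⁻¹) ≤ (1 - x)⁻¹ - 1 :=
    Real.log_le_sub_one_of_pos (inv_pos.2 h1x0)
  have hloginv : Real.log ((1 - x)⁻¹) = - Real.log (1 - x) := Real.log_inv _
  have hfrac : (1 - x)⁻¹ - 1 = x / (1 - x) := by
    rw [eq_div_iff h1x0.ne', sub_mul, inv_mul_cancel₀ h1x0.ne']; ring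
  have hbound : x / (1 - x) ≤ a * R ^ 2 / ((R ^ 2 - a) * ρ ^ 2) := by
    rw [div_le_div_iff₀ (by linarith) (by positivity)]
    have hxa : x * t ^ 2 = a := by rw [hx]; field_simp
    have htρ : ρ ^ 2 ≤ t ^ 2 := by nlinarith
    have hx2 : x ≤ a / ρ ^ 2 := by
      rw [hx]; gcongr
    have h1x : (R ^ 2 - a) / R ^ 2 ≤ 1 - x := by
      have : x ≤ a / R ^ 2 := by rw [hx]; gcongr
      have : a / R ^ 2 = 1 - (R^2 - a)/R^2 := by field_simp; ring
      linarith [hx2.trans_eq rfl]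
    -- x * ((R^2 - a) * ρ^2) ≤ a * R^2 * (1 - x)
    have hxρ : x * ρ ^ 2 ≤ a := by
      have := mul_le_mul_of_nonneg_right hx2 (le_of_lt (by positivity : (0:ℝ) < ρ ^ 2))
      calc x * ρ ^ 2 ≤ a / ρ ^ 2 * ρ ^ 2 := this
        _ = a := by field_simp
    calc x * ((R ^ 2 - a) * ρ ^ 2) = (x * ρ ^ 2) * (R ^ 2 - a) := by ring
      _ ≤ a * (R ^ 2 - a) := by
          apply mul_le_mul_of_nonneg_right hxρ hR2a.le
      _ ≤ a * R ^ 2 * (1 - x) := by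
          have := h1x
          have hRR : (0:ℝ) < R ^ 2 := by positivity
          rw [div_le_iff₀ hRR] at this
          nlinarith
  linarith

lemma iter_up (ha : 0 < a) (hR1 : 1 < R) (hRa : R + a < R ^ 2) :
    ∀ (d : ℕ) (ρ : ℝ) (w : ℂ), R ≤ ρ → ρ ≤ ‖w‖ →
      Real.log (‖(QC a)^[d] w‖) ≤
        2 ^ d * (Real.log (‖w‖) + 2 * a / ρ ^ 2) := by
  intro d
  induction d with
  | zero =>
    intro ρ w hρ hw
    have hρ0 : 0 < ρ := by linarith
    have : 0 ≤ 2 * a / ρ ^ 2 := by positivity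
    simpa using by linarith
  | succ d ih =>
    intro ρ w hρ hw
    have hρ0 : 0 < ρ := by linarith
    set lam := (R ^ 2 - a) / R with hlam
    have hR0 : (0:ℝ) < R := by linarith
    have hlam1 : 1 < lam := one_lt_lam ha hRa hR0
    have hwR : R ≤ ‖w‖ := hρ.trans hw
    have hQw : lam * ρ ≤ ‖QC a w‖ := by
      calc lam * ρ ≤ lam * ‖w‖ := by
            apply mul_le_mul_of_nonneg_left hw (by linarith)
        _ ≤ ‖QC a w‖ := expand_once ha hRa hR0 hwR
    have hRlam : R ≤ lam * ρ := by nlinarith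
    have hih := ih (lam * ρ) (QC a w) hRlam hQw
    rw [Function.iterate_succ_apply]
    have h1 : Real.log (‖QC a w‖) ≤ 2 * Real.log (‖w‖) + a / ρ ^ 2 :=
      onestep_up ha hR1 hRa hρ hw
    have herr : 2 * a / (lam * ρ) ^ 2 ≤ 2 * a / ρ ^ 2 := by
      have hl2 : 1 ≤ lam * lam := by nlinarith
      have h2 : ρ ^ 2 ≤ (lam * ρ) ^ 2 := by nlinarith [mul_pos hρ0 hρ0]
      exact div_le_div_of_nonneg_left (by positivity) (by positivity) h2
    have haρ : 0 ≤ a / ρ ^ 2 := by positivity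
    have hA : Real.log (‖QC a w‖) + 2 * a / (lam * ρ) ^ 2 ≤
        2 * (Real.log (‖w‖) + 2 * a / ρ ^ 2) := by
      have : 2 * a / ρ ^ 2 = 2 * (a / ρ ^ 2) := by ring
      rw [this] at herr ⊢
      linarith
    calc Real.log (‖(QC a)^[d] (QC a w)‖) ≤
        2 ^ d * (Real.log (‖QC a w‖) + 2 * a / (lam * ρ) ^ 2) := hih
      _ ≤ 2 ^ d * (2 * (Real.log (‖w‖) + 2 * a / ρ ^ 2)) := by
          apply mul_le_mul_of_nonneg_left hA (by positivity)
      _ = 2 ^ (d + 1) * (Real.log (‖w‖) + 2 * a / ρ ^ 2) := by ring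

lemma iter_down (ha : 0 < a) (hR1 : 1 < R) (hRa : R + a < R ^ 2) :
    ∀ (d : ℕ) (w : ℂ), R ≤ ‖w‖ →
      2 ^ d * (Real.log (‖w‖) - 2 * a / (R ^ 2 - a)) ≤
        Real.log (‖(QC a)^[d] w‖) := by
  have hR0 : (0:ℝ) < R := by linarith
  have hR2a : 0 < R ^ 2 - a := by nlinarith
  intro d
  induction d with
  | zero =>
    intro w hw
    have : 0 ≤ 2 * a / (R ^ 2 - a) := by positivity
    simpa using by linarith
  | succ d ih =>
    intro w hw
    set lam := (R ^ 2 - a) / R with hlam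
    have hlam1 : 1 < lam := one_lt_lam ha hRa hR0
    have hQw : R ≤ ‖QC a w‖ := by
      have h := expand_once ha hRa hR0 hw
      nlinarith [norm_nonneg w]
    have hih := ih (QC a w) hQw
    rw [Function.iterate_succ_apply]
    have h1 : 2 * Real.log (‖w‖) - a * R ^ 2 / ((R ^ 2 - a) * R ^ 2)
        ≤ Real.log (‖QC a w‖) := onestep_down ha hR1 hRa le_rfl hw
    have heq : a * R ^ 2 / ((R ^ 2 - a) * R ^ 2) = a / (R ^ 2 - a) := by
      rw [mul_comm (R ^ 2 - a) (R ^ 2), ← div_div]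
      congr 1
      field_simp
    rw [heq] at h1
    have hA : 2 * (Real.log (‖w‖) - 2 * a / (R ^ 2 - a)) ≤
        Real.log (‖QC a w‖) - 2 * a / (R ^ 2 - a) := by
      have h3 : 0 ≤ a / (R ^ 2 - a) := by positivity
      have h4 : 2 * a / (R ^ 2 - a) = 2 * (a / (R ^ 2 - a)) := by ring
      rw [h4]
      linarith
    calc 2 ^ (d + 1) * (Real.log (‖w‖) - 2 * a / (R ^ 2 - a))
        = 2 ^ d * (2 * (Real.log (‖w‖) - 2 * a / (R ^ 2 - a))) := by ring
      _ ≤ 2 ^ d * (Real.log (‖QC a w‖) - 2 * a / (R ^ 2 - a)) := by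
          apply mul_le_mul_of_nonneg_left hA (by positivity)
      _ ≤ Real.log (‖(QC a)^[d] (QC a w)‖) := hih

end Exp

section More
variable {a R : ℝ}

lemma qc_diff (a : ℝ) : Differentiable ℂ (QC a) := by
  unfold QC
  exact (differentiable_const _).sub (differentiable_pow 2)

lemma qc_cont (a : ℝ) : Continuous (QC a) := (qc_diff a).continuous

lemma deriv_QC (a : ℝ) (z : ℂ) : deriv (QC a) z = -2 * z := by
  unfold QC
  rw [deriv_fun_sub (differentiableAt_const _) (differentiableAt_pow 2), deriv_const, deriv_pow_field]
  push_cast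
  ring

lemma iter_diff (a : ℝ) (n : ℕ) : Differentiable ℂ ((QC a)^[n]) :=
  (qc_diff a).iterate n

lemma deriv_iter (a : ℝ) : ∀ (N : ℕ) (z : ℂ),
    deriv ((QC a)^[N]) z = ∏ k ∈ Finset.range N, (-2 * (QC a)^[k] z) := by
  intro N
  induction N with
  | zero => intro z; simp
  | succ n ih =>
    intro z
    rw [Function.iterate_succ']
    rw [deriv_comp z ((qc_diff a).differentiableAt) ((iter_diff a n).differentiableAt)]
    rw [deriv_QC, ih, Finset.prod_range_succ]
    ring

lemma abs_deriv_iter (a : ℝ) (N : ℕ) (z : ℂ) :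
    ‖deriv ((QC a)^[N]) z‖ =
      2 ^ N * ∏ k ∈ Finset.range N, ‖(QC a)^[k] z‖ := by
  rw [deriv_iter a N z, norm_prod]
  rw [show (fun k => ‖-2 * (QC a)^[k] z‖) = fun k => 2 * ‖(QC a)^[k] z‖ by
    funext k
    rw [norm_mul]
    norm_num]
  rw [Finset.prod_mul_distrib, Finset.prod_const, Finset.card_range]

lemma real_iter (a : ℝ) : ∀ (n : ℕ) (x : ℝ), (QC a)^[n] (x:ℂ) = (((Q a)^[n] x : ℝ) : ℂ) := by
  intro n
  induction n with
  | zero => intro x; simp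
  | succ k ih =>
    intro x
    rw [Function.iterate_succ_apply, Function.iterate_succ_apply]
    rw [show QC a (x:ℂ) = ((Q a x : ℝ) : ℂ) by unfold QC Q; push_cast; ring]
    exact ih (Q a x)

lemma orbit_eventually {k p : ℕ} (hp1 : 1 ≤ p)
    (hper : (Q a)^[p] ((Q a)^[k] 0) = (Q a)^[k] 0) :
    ∀ n : ℕ, ∃ i, i < k + p ∧ (Q a)^[n] 0 = (Q a)^[i] 0 := by
  intro n
  induction n using Nat.strong_induction_on with
  | _ n ih =>
    by_cases hn : n < k + p
    · exact ⟨n, hn, rfl⟩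
    · push_neg at hn
      have hstep : (Q a)^[n] 0 = (Q a)^[n - p] 0 := by
        have hj : n - p - k + p + k = n := by omega
        have hj2 : n - p - k + k = n - p := by omega
        calc (Q a)^[n] 0 = (Q a)^[n - p - k + p + k] 0 := by rw [hj]
          _ = (Q a)^[n - p - k] ((Q a)^[p] ((Q a)^[k] 0)) := by
              rw [Function.iterate_add_apply, Function.iterate_add_apply]
          _ = (Q a)^[n - p - k] ((Q a)^[k] 0) := by rw [hper]
          _ = (Q a)^[n - p] 0 := by rw [← Function.iterate_add_apply, hj2]
      obtain ⟨i, hi, hieq⟩ := ih (n - p) (by omega)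
      exact ⟨i, hi, hstep.trans hieq⟩

lemma postcrit_small (hR : AdmRadius a R) (hMa : MT a) :
    ∀ j : ℕ, ‖(QC a)^[j] 0‖ < R := by
  obtain ⟨_, k, _, p, hp1, hper⟩ := hMa
  intro j
  apply hR.2.1
  have hsub : (Set.range fun n : ℕ => (QC a)^[n] ((QC a)^[j] 0)) ⊆
      (fun i : ℕ => (((Q a)^[i] 0 : ℝ) : ℂ)) '' (Set.Iio (k + p)) := by
    rintro z ⟨n, rfl⟩
    have h1 : (QC a)^[n] ((QC a)^[j] 0) = (QC a)^[n + j] 0 := by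
      rw [Function.iterate_add_apply]
    obtain ⟨i, hi, hieq⟩ := orbit_eventually hp1 hper (n + j)
    refine ⟨i, hi, ?_⟩
    show (((Q a)^[i] 0 : ℝ) : ℂ) = (QC a)^[n] ((QC a)^[j] 0)
    rw [h1, show (0:ℂ) = ((0:ℝ):ℂ) by norm_num, real_iter a (n + j) 0, hieq]
  exact (((Set.finite_Iio (k + p)).image _).isBounded).subset hsub

lemma safe_radius (hR0 : 0 < R) (hb : ∀ j : ℕ, ‖(QC a)^[j] 0‖ < R) :
    ∀ M : ℕ, ∃ δ : ℝ, 0 < δ ∧ ∀ j ≤ M, ∀ w : ℂ, ‖w‖ < δ →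
      ‖(QC a)^[j] w‖ < R := by
  have single : ∀ j : ℕ, ∃ δ : ℝ, 0 < δ ∧ ∀ w : ℂ, ‖w‖ < δ →
      ‖(QC a)^[j] w‖ < R := by
    intro j
    have hc : Continuous fun w : ℂ => ‖(QC a)^[j] w‖ :=
      continuous_norm.comp ((qc_cont a).iterate j)
    have hca := hc.continuousAt (x := (0:ℂ))
    rw [Metric.continuousAt_iff] at hca
    obtain ⟨δ, hδ0, hδ⟩ := hca (R - ‖(QC a)^[j] 0‖) (by linarith [hb j])
    refine ⟨δ, hδ0, fun w hw => ?_⟩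
    have hd : dist w 0 < δ := by simpa [Complex.dist_eq] using hw
    have := hδ hd
    rw [Real.dist_eq, abs_lt] at this
    linarith [this.2]
  intro M
  induction M with
  | zero =>
    obtain ⟨δ, hδ0, hδ⟩ := single 0
    exact ⟨δ, hδ0, fun j hj w hw => by rw [Nat.le_zero.1 hj]; exact hδ w hw⟩
  | succ M ih =>
    obtain ⟨δ1, hδ10, hδ1⟩ := ih
    obtain ⟨δ2, hδ20, hδ2⟩ := single (M + 1)
    refine ⟨min δ1 δ2, lt_min hδ10 hδ20, fun j hj w hw => ?_⟩
    rcases Nat.lt_or_ge j (M + 1) with h | h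
    · exact hδ1 j (by omega) w (hw.trans_le (min_le_left _ _))
    · have : j = M + 1 := by omega
      rw [this]
      exact hδ2 w (hw.trans_le (min_le_right _ _))

/-- growth function for the prefix -/
def g (a : ℝ) : ℝ → ℝ := fun x => x ^ 2 + a

lemma g_le_iter (ha : 0 < a) (ha1 : 1 ≤ a) : ∀ (j : ℕ) (y : ℝ), y ≤ (g a)^[j] y := by
  intro j
  induction j with
  | zero => intro y; simp
  | succ k ih =>
    intro y
    have h1 : y ≤ g a y := by unfold g; nlinarith [sq_nonneg (y - 1/2)]
    calc y ≤ g a y := h1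
      _ ≤ (g a)^[k] (g a y) := ih (g a y)
      _ = (g a)^[k+1] y := (Function.iterate_succ_apply (g a) k y).symm

lemma prefix_bound (ha : 0 < a) (hR0 : 0 ≤ R) :
    ∀ (k : ℕ) (z₀ : ℂ), ‖z₀‖ ≤ R →
      ‖(QC a)^[k] z₀‖ ≤ (g a)^[k] R := by
  intro k
  induction k with
  | zero => intro z₀ h; simpa using h
  | succ k ih =>
    intro z₀ h
    rw [Function.iterate_succ_apply', Function.iterate_succ_apply']
    calc ‖QC a ((QC a)^[k] z₀)‖ ≤ ‖(QC a)^[k] z₀‖ ^ 2 + a :=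
        abs_QC_le a ha.le _
      _ ≤ ((g a)^[k] R) ^ 2 + a := by
          have := ih z₀ h
          nlinarith [norm_nonneg ((QC a)^[k] z₀)]
      _ = g a ((g a)^[k] R) := rfl

end More

lemma div_step {k N : ℕ} (hkN : k ≤ N) {LN Lk e : ℝ}
    (h : LN ≤ 2 ^ (N - k) * (Lk + e)) :
    2 ^ k * (LN / 2 ^ N) ≤ Lk + e := by
  have h2N : (0:ℝ) < 2 ^ N := by positivity
  rw [← mul_div_assoc, div_le_iff₀ h2N]
  have hsplit : (2:ℝ) ^ (N - k) * 2 ^ k = 2 ^ N := by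
    rw [← pow_add]; congr 1; omega
  calc (2:ℝ) ^ k * LN ≤ 2 ^ k * (2 ^ (N - k) * (Lk + e)) := by
        apply mul_le_mul_of_nonneg_left h (by positivity)
    _ = (Lk + e) * ((2:ℝ) ^ (N - k) * 2 ^ k) := by ring
    _ = (Lk + e) * 2 ^ N := by rw [hsplit]

end Stmt5Aux

set_option maxHeartbeats 1000000
open Stmt5Aux

/-- Backward shrinking of `Q_a` outside `V_a` (Lemma on contracting inverse branches,
case (i)). -/
theorem stmt_5 (a R : ℝ) (ha1 : 1 < a) (ha2 : a ≤ 2) (hMa : MT a) (hR : AdmRadius a R) :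
    ∀ m : ℕ, 1 ≤ m → ∃ K : ℝ, 0 < K ∧
      ∀ z₀ : ℂ, ∀ n : ℕ, 1 ≤ n →
        R ≤ ‖QC a ((QC a)^[m] z₀)‖ →
        R ≤ ‖(QC a)^[m * n] z₀‖ →
          ‖z₀‖ ≤
              K * ‖(QC a)^[m * n] z₀‖ ^ ((2 : ℝ) ^ (-((m * n : ℕ) : ℝ))) ∧
          K⁻¹ * 2 ^ (m * n) *
              ‖(QC a)^[m * n] z₀‖ ^ (1 - (2 : ℝ) ^ (-((m * n : ℕ) : ℝ)))
            ≤ ‖deriv ((QC a)^[m * n]) z₀‖ := by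
  obtain ⟨h1R, haR, hRa⟩ := R_facts a R ha1 ha2 hR
  have ha0 : (0:ℝ) < a := by linarith
  have hR0 : (0:ℝ) < R := by linarith
  intro m hm
  obtain ⟨δ, hδ0, hδ⟩ := safe_radius hR.1 (postcrit_small hR hMa) (m + 1)
  set ε := min δ 1 with hεdef
  have hε0 : 0 < ε := lt_min hδ0 one_pos
  have hε1 : ε ≤ 1 := min_le_right _ _
  have hεlem : ∀ (w : ℂ) (j : ℕ), j ≤ m + 1 → R ≤ ‖(QC a)^[j] w‖ →
      ε ≤ ‖w‖ := by
    intro w j hj hRw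
    by_contra hcon
    push_neg at hcon
    have hlt : ‖w‖ < δ := lt_of_lt_of_le hcon (min_le_left _ _)
    exact absurd hRw (not_le.2 (hδ j hj w hlt))
  set lam := (R ^ 2 - a) / R with hlamdef
  have hlam1 : 1 < lam := one_lt_lam ha0 hRa hR0
  have hlam0 : 0 < lam := by linarith
  set q := (lam ^ 2)⁻¹ with hqdef
  have hq0 : 0 < q := by positivity
  have hq1 : q < 1 := by
    rw [hqdef, inv_lt_one_iff₀]
    right; nlinarith
  set Γ := (g a)^[m + 1] R with hΓdef
  have hΓR : R ≤ Γ := g_le_iter ha0 ha1.le (m + 1) R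
  set c' := 2 * a / R ^ 2 with hc'def
  have hc'0 : 0 < c' := by positivity
  set c'' := c' / q ^ (m + 1) with hc''def
  have hc''0 : 0 < c'' := by positivity
  have hc'c'' : c' ≤ c'' := by
    rw [hc''def, le_div_iff₀ (by positivity)]
    nlinarith [pow_le_one₀ hq0.le hq1.le (n := m + 1)]
  set X := Real.log Γ + c' with hXdef
  have hX0 : 0 ≤ X := by
    have : 0 ≤ Real.log Γ := Real.log_nonneg (by linarith)
    linarith
  have hXε : 0 ≤ X - Real.log ε := by
    have : Real.log ε ≤ 0 := Real.log_nonpos hε0.le hε1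
    linarith
  set Cearly := (m + 1 : ℝ) * (X - Real.log ε) with hCearlydef
  have hCearly0 : 0 ≤ Cearly := by positivity
  set Cgeo := c'' / (1 - q) with hCgeodef
  have hCgeo0 : 0 ≤ Cgeo := by
    apply div_nonneg hc''0.le; linarith
  set Edown := 2 * a / (R ^ 2 - a) with hEdowndef
  have hEdown0 : 0 ≤ Edown := by
    apply div_nonneg (by linarith); nlinarith
  set Cbig := Edown + Cearly + Cgeo with hCbigdef
  have hCbig0 : 0 ≤ Cbig := by linarith
  set K := R + Real.exp Cbig with hKdef
  have hK0 : 0 < K := by positivity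
  have hKR : R ≤ K := by
    have := Real.exp_pos Cbig; linarith
  have hKexp : Real.exp Cbig ≤ K := by linarith
  have hlogK : Cbig ≤ Real.log K := by
    have h := Real.log_le_log (Real.exp_pos Cbig) hKexp
    rwa [Real.log_exp] at h
  refine ⟨K, hK0, ?_⟩
  intro z₀ n hn h1 hN
  set N := m * n with hNdef
  have hmN : m ≤ N := by
    have := Nat.mul_le_mul_left m hn
    simpa [hNdef] using this
  have hNcase : m + 1 ≤ N ∨ N = m := by
    rcases (by omega : n = 1 ∨ 2 ≤ n) with h | h
    · right; rw [hNdef, h, mul_one]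
    · left
      have h2 : m * 2 ≤ m * n := Nat.mul_le_mul_left m h
      omega
  have hm1 : R ≤ ‖(QC a)^[m + 1] z₀‖ := by
    rw [Function.iterate_succ_apply']; exact h1
  have htN0 : (0:ℝ) < ‖(QC a)^[N] z₀‖ := lt_of_lt_of_le hR0 hN
  have h2N : (0:ℝ) < 2 ^ N := by positivity
  have hLN0 : 0 ≤ Real.log (‖(QC a)^[N] z₀‖) :=
    Real.log_nonneg (by linarith)
  -- the exponent conversion
  have hexp : (2 : ℝ) ^ (-((N : ℕ) : ℝ)) = ((2:ℝ) ^ N)⁻¹ := by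
    rw [Real.rpow_neg (by norm_num), Real.rpow_natCast]
  -- upper bound on log t_N in the small-start case
  have hLNup : ‖z₀‖ < R → m + 1 ≤ N →
      Real.log (‖(QC a)^[N] z₀‖) ≤ 2 ^ (N - (m+1)) * X := by
    intro hz hup
    have hiter := iter_up ha0 h1R hRa (N - (m + 1)) R ((QC a)^[m + 1] z₀) le_rfl hm1
    rw [← Function.iterate_add_apply, (by omega : N - (m + 1) + (m + 1) = N)] at hiter
    have hΓb : ‖(QC a)^[m + 1] z₀‖ ≤ Γ := prefix_bound ha0 hR0.le (m + 1) z₀ hz.le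
    have hlogΓ : Real.log (‖(QC a)^[m + 1] z₀‖) ≤ Real.log Γ :=
      Real.log_le_log (by linarith) hΓb
    calc Real.log (‖(QC a)^[N] z₀‖) ≤
        2 ^ (N - (m+1)) * (Real.log (‖(QC a)^[m + 1] z₀‖) + 2 * a / R ^ 2) := hiter
      _ ≤ 2 ^ (N - (m+1)) * X := by
          apply mul_le_mul_of_nonneg_left _ (by positivity)
          rw [hXdef, hc'def]; linarith
  -- the per-term estimate
  have hterm : ∀ k, k < N → (0:ℝ) < ‖(QC a)^[k] z₀‖ ∧
      2 ^ k * (Real.log (‖(QC a)^[N] z₀‖) / 2 ^ N) ≤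
        Real.log (‖(QC a)^[k] z₀‖) +
          ((if k ≤ m then X - Real.log ε else 0) + c'' * q ^ k) := by
    intro k hk
    have hite0 : 0 ≤ (if k ≤ m then X - Real.log ε else 0) := by
      split_ifs
      · exact hXε
      · exact le_refl 0
    rcases le_or_gt R (‖z₀‖) with hz0 | hz0
    · -- big start : expansion from index 0
      have hρ : lam ^ k * R ≤ ‖(QC a)^[k] z₀‖ := by
        have := iter_expand ha0 hRa hR0 k z₀ (by simpa using hz0)
        simpa [hlamdef] using this
      have hRρ : R ≤ lam ^ k * R :=
        le_mul_of_one_le_left hR0.le (one_le_pow₀ hlam1.le)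
      have hpos : (0:ℝ) < ‖(QC a)^[k] z₀‖ :=
        lt_of_lt_of_le (by positivity) hρ
      have hup := iter_up ha0 h1R hRa (N - k) (lam ^ k * R) ((QC a)^[k] z₀) hRρ hρ
      rw [← Function.iterate_add_apply, (by omega : N - k + k = N)] at hup
      have herr : 2 * a / (lam ^ k * R) ^ 2 = c' * q ^ k := by
        rw [hc'def, hqdef, mul_pow, ← pow_mul, mul_comm k 2, pow_mul, inv_pow]
        field_simp
      rw [herr] at hup
      refine ⟨hpos, ?_⟩
      have hds := div_step (le_of_lt hk) hup
      have hc'q : c' * q ^ k ≤ c'' * q ^ k :=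
        mul_le_mul_of_nonneg_right hc'c'' (by positivity)
      linarith
    · rcases le_or_gt k m with hkm | hkm
      · -- early indices, small start
        have hεk : ε ≤ ‖(QC a)^[k] z₀‖ := by
          apply hεlem ((QC a)^[k] z₀) (m + 1 - k) (by omega)
          rw [← Function.iterate_add_apply, (by omega : m + 1 - k + k = m + 1)]
          exact hm1
        have hpos : (0:ℝ) < ‖(QC a)^[k] z₀‖ := lt_of_lt_of_le hε0 hεk
        have hlogε : Real.log ε ≤ Real.log (‖(QC a)^[k] z₀‖) :=
          Real.log_le_log hε0 hεk
        have hXbound : 2 ^ k * (Real.log (‖(QC a)^[N] z₀‖) / 2 ^ N) ≤ X := by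
          rcases hNcase with hup | hNm
          · have hLN := hLNup hz0 hup
            have hdiv : Real.log (‖(QC a)^[N] z₀‖) / 2 ^ N ≤ X / 2 ^ (m + 1) := by
              rw [div_le_div_iff₀ h2N (by positivity)]
              calc Real.log (‖(QC a)^[N] z₀‖) * 2 ^ (m + 1) ≤
                  (2 ^ (N - (m+1)) * X) * 2 ^ (m + 1) := by
                    apply mul_le_mul_of_nonneg_right hLN (by positivity)
                _ = X * ((2:ℝ) ^ (N - (m+1)) * 2 ^ (m + 1)) := by ring
                _ = X * 2 ^ N := by
                    rw [← pow_add, (by omega : N - (m + 1) + (m + 1) = N)]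
            calc (2:ℝ) ^ k * (Real.log (‖(QC a)^[N] z₀‖) / 2 ^ N) ≤
                2 ^ k * (X / 2 ^ (m + 1)) := by
                  apply mul_le_mul_of_nonneg_left hdiv (by positivity)
              _ ≤ 2 ^ (m + 1) * (X / 2 ^ (m + 1)) := by
                  apply mul_le_mul_of_nonneg_right _ (by positivity)
                  exact pow_le_pow_right₀ (by norm_num) (by omega)
              _ = X := by field_simp
          · -- N = m
            have htm : ‖(QC a)^[N] z₀‖ ≤ Γ := by
              have hpre := prefix_bound ha0 hR0.le N z₀ hz0.le
              have hmono : (g a)^[N] R ≤ Γ := by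
                rw [hΓdef, (by omega : m + 1 = 1 + N), Function.iterate_add_apply]
                exact g_le_iter ha0 ha1.le 1 ((g a)^[N] R)
              exact hpre.trans hmono
            have hLm : Real.log (‖(QC a)^[N] z₀‖) ≤ Real.log Γ :=
              Real.log_le_log htN0 htm
            calc (2:ℝ) ^ k * (Real.log (‖(QC a)^[N] z₀‖) / 2 ^ N) ≤
                2 ^ N * (Real.log (‖(QC a)^[N] z₀‖) / 2 ^ N) := by
                  apply mul_le_mul_of_nonneg_right _ (by positivity)
                  exact pow_le_pow_right₀ (by norm_num) (by omega)
              _ = Real.log (‖(QC a)^[N] z₀‖) := by field_simp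
              _ ≤ Real.log Γ := hLm
              _ ≤ X := by rw [hXdef]; linarith
        refine ⟨hpos, ?_⟩
        have hcq : 0 ≤ c'' * q ^ k := by positivity
        rw [if_pos hkm]
        linarith
      · -- late indices
        have hρ : lam ^ (k - (m+1)) * R ≤ ‖(QC a)^[k] z₀‖ := by
          have := iter_expand ha0 hRa hR0 (k - (m + 1)) ((QC a)^[m + 1] z₀) hm1
          rwa [← Function.iterate_add_apply, (by omega : k - (m + 1) + (m + 1) = k),
            ← hlamdef] at this
        have hRρ : R ≤ lam ^ (k - (m+1)) * R :=
          le_mul_of_one_le_left hR0.le (one_le_pow₀ hlam1.le)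
        have hpos : (0:ℝ) < ‖(QC a)^[k] z₀‖ :=
          lt_of_lt_of_le (by positivity) hρ
        have hup := iter_up ha0 h1R hRa (N - k) (lam ^ (k - (m+1)) * R) ((QC a)^[k] z₀) hRρ hρ
        rw [← Function.iterate_add_apply, (by omega : N - k + k = N)] at hup
        have herr : 2 * a / (lam ^ (k - (m+1)) * R) ^ 2 = c'' * q ^ k := by
          have hqe : q ^ k = q ^ (k - (m+1)) * q ^ (m + 1) := by
            rw [← pow_add]; congr 1; omega
          have hgen : 2 * a / (lam ^ (k - (m+1)) * R) ^ 2 = c' * q ^ (k - (m+1)) := by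
            rw [hc'def, hqdef, mul_pow, ← pow_mul, mul_comm (k - (m+1)) 2, pow_mul, inv_pow]
            field_simp
          have hq' : (q:ℝ) ^ (m+1) ≠ 0 := pow_ne_zero _ hq0.ne'
          rw [hgen, hc''def, hqe]
          field_simp
        rw [herr] at hup
        exact ⟨hpos, by
          have hds := div_step (le_of_lt hk) hup
          linarith⟩
  -- summation stage
  have hsumterm : ∑ k ∈ Finset.range N,
        ((2:ℝ) ^ k * (Real.log (‖(QC a)^[N] z₀‖) / 2 ^ N)) ≤
      ∑ k ∈ Finset.range N, (Real.log (‖(QC a)^[k] z₀‖) +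
          ((if k ≤ m then X - Real.log ε else 0) + c'' * q ^ k)) :=
    Finset.sum_le_sum (fun k hk => (hterm k (Finset.mem_range.1 hk)).2)
  have hgeom2 : ∑ k ∈ Finset.range N, (2:ℝ) ^ k = 2 ^ N - 1 := by
    rw [geom_sum_eq (by norm_num : (2:ℝ) ≠ 1)]; norm_num
  have hLHS : ∑ k ∈ Finset.range N,
      ((2:ℝ) ^ k * (Real.log (‖(QC a)^[N] z₀‖) / 2 ^ N)) =
      (2 ^ N - 1) * (Real.log (‖(QC a)^[N] z₀‖) / 2 ^ N) := by
    rw [← Finset.sum_mul, hgeom2]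
  have hRHS : ∑ k ∈ Finset.range N, (Real.log (‖(QC a)^[k] z₀‖) +
        ((if k ≤ m then X - Real.log ε else 0) + c'' * q ^ k)) =
      (∑ k ∈ Finset.range N, Real.log (‖(QC a)^[k] z₀‖)) +
        ((∑ k ∈ Finset.range N, (if k ≤ m then X - Real.log ε else 0)) +
          c'' * ∑ k ∈ Finset.range N, q ^ k) := by
    rw [Finset.sum_add_distrib, Finset.sum_add_distrib, Finset.mul_sum]
  have hItesum : ∑ k ∈ Finset.range N, (if k ≤ m then X - Real.log ε else 0) ≤ Cearly := by
    rw [← Finset.sum_filter, Finset.sum_const, nsmul_eq_mul]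
    rw [hCearlydef]
    apply mul_le_mul_of_nonneg_right _ hXε
    have hsub : (Finset.range N).filter (fun k => k ≤ m) ⊆ Finset.range (m + 1) := by
      intro x hx
      simp only [Finset.mem_filter, Finset.mem_range] at *
      omega
    have hcard := Finset.card_le_card hsub
    rw [Finset.card_range] at hcard
    exact_mod_cast hcard
  have hqsum : ∑ k ∈ Finset.range N, q ^ k ≤ 1 / (1 - q) := by
    have h1q : (0:ℝ) < 1 - q := by linarith only [hq1]
    have hqN : (0:ℝ) ≤ q ^ N := pow_nonneg hq0.le N
    rw [geom_sum_eq hq1.ne]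
    have heq : (q ^ N - 1) / (q - 1) = (1 - q ^ N) / (1 - q) := by
      rw [div_eq_div_iff (sub_ne_zero.2 hq1.ne) h1q.ne']
      ring
    rw [heq]
    have hle : 1 - q ^ N ≤ 1 := by linarith only [hqN]
    exact (div_le_div_iff_of_pos_right h1q).2 hle
  have hGeosum : c'' * ∑ k ∈ Finset.range N, q ^ k ≤ Cgeo := by
    calc c'' * ∑ k ∈ Finset.range N, q ^ k ≤ c'' * (1 / (1 - q)) :=
        mul_le_mul_of_nonneg_left hqsum hc''0.le
      _ = Cgeo := by rw [hCgeodef, mul_one_div]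
  have hid : ((2:ℝ) ^ N - 1) * (Real.log (‖(QC a)^[N] z₀‖) / 2 ^ N) =
      Real.log (‖(QC a)^[N] z₀‖) -
        Real.log (‖(QC a)^[N] z₀‖) / 2 ^ N := by
    field_simp
  have hsum : Real.log (‖(QC a)^[N] z₀‖) -
      Real.log (‖(QC a)^[N] z₀‖) / 2 ^ N ≤
      (∑ k ∈ Finset.range N, Real.log (‖(QC a)^[k] z₀‖)) + (Cearly + Cgeo) := by
    rw [← hid]
    rw [hLHS, hRHS] at hsumterm
    linarith only [hsumterm, hItesum, hGeosum]
  have hprodpos : 0 < ∏ k ∈ Finset.range N, ‖(QC a)^[k] z₀‖ :=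
    Finset.prod_pos (fun k hk => (hterm k (Finset.mem_range.1 hk)).1)
  have hlogprod : Real.log (∏ k ∈ Finset.range N, ‖(QC a)^[k] z₀‖) =
      ∑ k ∈ Finset.range N, Real.log (‖(QC a)^[k] z₀‖) :=
    Real.log_prod (fun k hk => ((hterm k (Finset.mem_range.1 hk)).1).ne')
  constructor
  · -- first estimate
    rcases le_or_gt R (‖z₀‖) with hz0 | hz0
    · have hdown := iter_down ha0 h1R hRa N z₀ (by simpa using hz0)
      rw [← hEdowndef] at hdown
      have hz00 : (0:ℝ) < ‖z₀‖ := by linarith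
      have habs0 : Real.log (‖(QC a)^[0] z₀‖) = Real.log (‖z₀‖) := by
        simp
      have hL0 : Real.log (‖z₀‖) ≤
          Real.log (‖(QC a)^[N] z₀‖) / 2 ^ N + Edown := by
        have h' : Real.log (‖z₀‖) - Edown ≤
            Real.log (‖(QC a)^[N] z₀‖) / 2 ^ N := by
          rw [le_div_iff₀ h2N, mul_comm]
          simpa using hdown
        linarith only [h']
      rw [hexp]
      calc ‖z₀‖ = Real.exp (Real.log (‖z₀‖)) :=
          (Real.exp_log hz00).symm
        _ ≤ Real.exp (Edown + Real.log (‖(QC a)^[N] z₀‖) * ((2:ℝ) ^ N)⁻¹) := by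
            apply Real.exp_le_exp.2
            rw [div_eq_mul_inv] at hL0
            linarith only [hL0]
        _ = Real.exp Edown *
            Real.exp (Real.log (‖(QC a)^[N] z₀‖) * ((2:ℝ) ^ N)⁻¹) :=
          Real.exp_add _ _
        _ = Real.exp Edown * ‖(QC a)^[N] z₀‖ ^ (((2:ℝ) ^ N)⁻¹) := by
            rw [Real.rpow_def_of_pos htN0]
        _ ≤ K * ‖(QC a)^[N] z₀‖ ^ (((2:ℝ) ^ N)⁻¹) := by
            apply mul_le_mul_of_nonneg_right _ (Real.rpow_pos_of_pos htN0 _).le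
            calc Real.exp Edown ≤ Real.exp Cbig := by
                  apply Real.exp_le_exp.2
                  rw [hCbigdef]
                  linarith only [hCearly0, hCgeo0]
              _ ≤ K := hKexp
    · rw [hexp]
      have h1tN : (1:ℝ) ≤ ‖(QC a)^[N] z₀‖ ^ (((2:ℝ) ^ N)⁻¹) := by
        calc (1:ℝ) = ‖(QC a)^[N] z₀‖ ^ (0:ℝ) := (Real.rpow_zero _).symm
          _ ≤ _ := Real.rpow_le_rpow_of_exponent_le (by linarith only [hN, h1R]) (by positivity)
      calc ‖z₀‖ ≤ R := hz0.le
        _ = R * 1 := (mul_one R).symm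
        _ ≤ K * ‖(QC a)^[N] z₀‖ ^ (((2:ℝ) ^ N)⁻¹) :=
            mul_le_mul hKR h1tN (by norm_num) hK0.le
  · -- derivative estimate
    rw [abs_deriv_iter a N z₀, hexp]
    have hsuf : K⁻¹ * ‖(QC a)^[N] z₀‖ ^ ((1:ℝ) - ((2:ℝ) ^ N)⁻¹) ≤
        ∏ k ∈ Finset.range N, ‖(QC a)^[k] z₀‖ := by
      have hrpos : (0:ℝ) < ‖(QC a)^[N] z₀‖ ^ ((1:ℝ) - ((2:ℝ) ^ N)⁻¹) :=
        Real.rpow_pos_of_pos htN0 _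
      have hlhspos : (0:ℝ) < K⁻¹ * ‖(QC a)^[N] z₀‖ ^ ((1:ℝ) - ((2:ℝ) ^ N)⁻¹) := by
        positivity
      rw [← Real.exp_log hlhspos, ← Real.exp_log hprodpos]
      apply Real.exp_le_exp.2
      rw [Real.log_mul (by positivity) hrpos.ne', Real.log_inv, Real.log_rpow htN0, hlogprod]
      have hfin : ((1:ℝ) - ((2:ℝ) ^ N)⁻¹) * Real.log (‖(QC a)^[N] z₀‖) =
          Real.log (‖(QC a)^[N] z₀‖) -
            Real.log (‖(QC a)^[N] z₀‖) / 2 ^ N := by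
        field_simp
      rw [hfin]
      have hCb : Cearly + Cgeo ≤ Real.log K := by
        rw [hCbigdef] at hlogK
        linarith only [hlogK, hEdown0]
      linarith only [hsum, hCb]
    calc K⁻¹ * 2 ^ N * ‖(QC a)^[N] z₀‖ ^ ((1:ℝ) - ((2:ℝ) ^ N)⁻¹) =
        2 ^ N * (K⁻¹ * ‖(QC a)^[N] z₀‖ ^ ((1:ℝ) - ((2:ℝ) ^ N)⁻¹)) := by ring
      _ ≤ 2 ^ N * ∏ k ∈ Finset.range N, ‖(QC a)^[k] z₀‖ := by
          apply mul_le_mul_of_nonneg_left hsuf (by positivity)
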